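/- If r·ln 2 ≤ q, then for all real K ≥ 1, (1 - e^{-q/r})^1 ≤ (1 - e^{-Kq/r})^K; i.e., K = 1 minimizes the Bloom filter false positive probability among K ≥ 1. -/

import Mathlib

open Real Set

/-- `x * log x` is monotone on `[e⁻¹, ∞)`. -/
lemma bloom_aux_mul_log_mono :
    MonotoneOn (fun x : ℝ => x * Real.log x) (Set.Ici (Real.exp (-1))) := by
  have hpos : ∀ x ∈ Set.Ici (Real.exp (-1)), (0:ℝ) < x := fun x hx =>
    lt_of_lt_of_le (Real.exp_pos _) hx
  have hderiv : ∀ x ∈ Set.Ioi (Real.exp (-1)),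
      HasDerivAt (fun x : ℝ => x * Real.log x) (Real.log x + 1) x := by
    intro x hx
    have hx0 : x ≠ 0 := ne_of_gt (lt_trans (Real.exp_pos _) hx)
    have := (hasDerivAt_id x).mul (Real.hasDerivAt_log hx0)
    exact this.congr_deriv (by simp [hx0])
  apply monotoneOn_of_deriv_nonneg (convex_Ici _)
  · apply ContinuousOn.mul continuousOn_id
    exact Real.continuousOn_log.mono (fun x hx => ne_of_gt (hpos x hx))
  · intro x hx
    rw [interior_Ici] at hx
    exact (hderiv x hx).differentiableAt.differentiableWithinAt
  · intro x hx
    rw [interior_Ici] at hx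
    rw [(hderiv x hx).deriv]
    have : Real.log (Real.exp (-1)) ≤ Real.log x :=
      Real.log_le_log (Real.exp_pos _) (le_of_lt hx)
    rw [Real.log_exp] at this
    linarith

/-- Key inequality: for `0 < u ≤ 1/2`, `u * log u ≤ (1-u) * log (1-u)`. -/
lemma bloom_aux_key (u : ℝ) (hu : 0 < u) (hu2 : u ≤ 1/2) :
    u * Real.log u ≤ (1 - u) * Real.log (1 - u) := by
  have h1u : (0:ℝ) < 1 - u := by linarith
  rcases le_or_gt u (Real.exp (-1)) with hcase | hcase
  · -- small u: u log u ≤ -u ≤ (1-u) log (1-u)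
    have hlogu : Real.log u ≤ -1 := by
      have := Real.log_le_log hu hcase
      rwa [Real.log_exp] at this
    have h1 : u * Real.log u ≤ -u := by nlinarith
    have h2 : -u ≤ (1 - u) * Real.log (1 - u) := by
      -- log (1-u) ≥ 1 - 1/(1-u) = -u/(1-u)
      have hinv : Real.log (1 - u)⁻¹ ≤ (1 - u)⁻¹ - 1 :=
        Real.log_le_sub_one_of_pos (by positivity)
      rw [Real.log_inv] at hinv
      have : -((1 - u)⁻¹ - 1) ≤ Real.log (1 - u) := by linarith
      have hb : -(u / (1 - u)) ≤ Real.log (1 - u) := by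
        have : (1 - u)⁻¹ - 1 = u / (1 - u) := by field_simp; ring
        linarith [this ▸ hinv]
      calc -u = (1 - u) * (-(u / (1 - u))) := by field_simp
        _ ≤ (1 - u) * Real.log (1 - u) := by
            apply mul_le_mul_of_nonneg_left hb (le_of_lt h1u)
    linarith
  · -- large u: both u and 1-u are ≥ e⁻¹, use monotonicity
    have he : Real.exp (-1) ≤ 1 - u := by
      have : Real.exp (-1) < 1/2 := by
        have := hcase.trans_le hu2
        linarith
      linarith
    exact bloom_aux_mul_log_mono (le_of_lt hcase) he (by linarith)

/-- `t * log (1 - exp (-t))` is monotone on `[log 2, ∞)`. -/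
lemma bloom_aux_h_mono :
    MonotoneOn (fun t : ℝ => t * Real.log (1 - Real.exp (-t))) (Set.Ici (Real.log 2)) := by
  have hlog2 : (0:ℝ) < Real.log 2 := Real.log_pos (by norm_num)
  have hbase : ∀ t ∈ Set.Ici (Real.log 2), (0:ℝ) < 1 - Real.exp (-t) := by
    intro t ht
    have : Real.exp (-t) < 1 := by
      rw [Real.exp_lt_one_iff]; simp only [Set.mem_Ici] at ht; linarith
    linarith
  have hderiv : ∀ t ∈ Set.Ioi (Real.log 2),
      HasDerivAt (fun t : ℝ => t * Real.log (1 - Real.exp (-t)))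
        (Real.log (1 - Real.exp (-t)) + t * (Real.exp (-t) / (1 - Real.exp (-t)))) t := by
    intro t ht
    have hb : (0:ℝ) < 1 - Real.exp (-t) := hbase t (Set.mem_Ici.mpr (le_of_lt (Set.mem_Ioi.mp ht)))
    have h1 : HasDerivAt (fun t : ℝ => 1 - Real.exp (-t)) (Real.exp (-t)) t := by
      have := ((hasDerivAt_id t).neg.exp)
      have h2 := (hasDerivAt_const t (1:ℝ)).sub this
      exact h2.congr_deriv (by simp)
    have h3 := h1.log (ne_of_gt hb)
    have h4 := (hasDerivAt_id t).mul h3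
    exact h4.congr_deriv (by simp only [id_eq]; ring)
  apply monotoneOn_of_deriv_nonneg (convex_Ici _)
  · apply ContinuousOn.mul continuousOn_id
    apply ContinuousOn.log
    · exact (continuous_const.sub (Real.continuous_exp.comp continuous_neg)).continuousOn
    · exact fun t ht => ne_of_gt (hbase t ht)
  · intro t ht
    rw [interior_Ici] at ht
    exact (hderiv t ht).differentiableAt.differentiableWithinAt
  · intro t ht
    rw [interior_Ici] at ht
    rw [(hderiv t ht).deriv]
    set u := Real.exp (-t) with hu
    have hupos : 0 < u := Real.exp_pos _
    have hu2 : u ≤ 1/2 := by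
      have : Real.exp (-t) ≤ Real.exp (-Real.log 2) := by
        apply Real.exp_le_exp.mpr
        simp only [Set.mem_Ioi] at ht; linarith
      have he2 : Real.exp (-Real.log 2) = 1/2 := by
        rw [Real.exp_neg, Real.exp_log (by norm_num : (0:ℝ) < 2)]; norm_num
      rw [hu]; rw [he2] at this; exact this
    have h1u : (0:ℝ) < 1 - u := by linarith
    have ht' : t = -Real.log u := by rw [hu, Real.log_exp]; ring
    have hkey := bloom_aux_key u hupos hu2
    rw [ht']
    have : Real.log (1 - u) + -Real.log u * (u / (1 - u))
        = ((1 - u) * Real.log (1 - u) - u * Real.log u) / (1 - u) := by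
      field_simp
      ring
    rw [this]
    apply div_nonneg _ (le_of_lt h1u)
    linarith

theorem bloom_fp_min_at_one (r q : ℝ) (hr : 0 < r) (hq : 0 < q)
    (h : r * Real.log 2 ≤ q) :
    ∀ K : ℝ, 1 ≤ K →
      (1 - Real.exp (-q / r)) ^ (1:ℝ) ≤ (1 - Real.exp (-(K * q) / r)) ^ K := by
  intro K hK
  set a := q / r with ha
  have ha2 : Real.log 2 ≤ a := by
    rw [ha, le_div_iff₀ hr]; linarith [h]
  have hlog2 : (0:ℝ) < Real.log 2 := Real.log_pos (by norm_num)
  have hapos : 0 < a := lt_of_lt_of_le hlog2 ha2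
  have hKa : a ≤ K * a := by nlinarith
  have hKa2 : Real.log 2 ≤ K * a := le_trans ha2 hKa
  have hb1 : (0:ℝ) < 1 - Real.exp (-a) := by
    have : Real.exp (-a) < 1 := by rw [Real.exp_lt_one_iff]; linarith
    linarith
  have hb2 : (0:ℝ) < 1 - Real.exp (-(K * a)) := by
    have : Real.exp (-(K * a)) < 1 := by
      rw [Real.exp_lt_one_iff]; linarith [lt_of_lt_of_le hlog2 hKa2]
    linarith
  have hmono := bloom_aux_h_mono (Set.mem_Ici.mpr ha2) (Set.mem_Ici.mpr hKa2) hKa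
  simp only at hmono
  -- hmono : a * log (1 - exp (-a)) ≤ (K*a) * log (1 - exp (-(K*a)))
  have hdiv : Real.log (1 - Real.exp (-a)) ≤ K * Real.log (1 - Real.exp (-(K * a))) := by
    have hmono' : a * Real.log (1 - Real.exp (-a))
        ≤ a * (K * Real.log (1 - Real.exp (-(K * a)))) := by nlinarith [hmono]
    exact le_of_mul_le_mul_left hmono' hapos
  have heq1 : -q / r = -a := by rw [ha]; ring
  have heq2 : -(K * q) / r = -(K * a) := by rw [ha]; ring
  rw [heq1, heq2, Real.rpow_one, Real.rpow_def_of_pos hb2]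
  calc 1 - Real.exp (-a) = Real.exp (Real.log (1 - Real.exp (-a))) := (Real.exp_log hb1).symm
    _ ≤ Real.exp (Real.log (1 - Real.exp (-(K * a))) * K) := by
        apply Real.exp_le_exp.mpr; linarith [hdiv]
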